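/- Define φ̃_j(x) = ∫_0^x ∫_0^t φ_j(u) du dt and Y^N(x) = γ + κx + ∑_{j=0}^N ζ_j φ̃_j(x) for x ∈ [0,1]. Then Y^N is convex on [0,1] if and only if ζ_j ≥ 0 for all j = 0,…,N. -/

import Mathlib

noncomputable def hat (N j : ℕ) (x : ℝ) : ℝ := max 0 (1 - (N : ℝ) * |x - (j : ℝ) / (N : ℝ)|)

noncomputable def hat2 (N j : ℕ) (x : ℝ) : ℝ :=
  ∫ t in (0 : ℝ)..x, ∫ u in (0 : ℝ)..t, hat N j u

noncomputable def Yconv (N : ℕ) (γ κ : ℝ) (ζ : ℕ → ℝ) (x : ℝ) : ℝ :=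
  γ + κ * x + ∑ j ∈ Finset.range (N + 1), ζ j * hat2 N j x

open Set intervalIntegral MeasureTheory Filter Topology

lemma hat_cont (N j : ℕ) : Continuous (hat N j) := by
  unfold hat
  exact continuous_const.max
    (continuous_const.sub (continuous_const.mul ((continuous_id.sub continuous_const).abs)))

lemma hat_nonneg (N j : ℕ) (x : ℝ) : 0 ≤ hat N j x := le_max_left _ _

noncomputable def hatI (N j : ℕ) (x : ℝ) : ℝ := ∫ u in (0 : ℝ)..x, hat N j u

lemma hasDerivAt_hatI (N j : ℕ) (x : ℝ) : HasDerivAt (hatI N j) (hat N j x) x :=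
  integral_hasDerivAt_right ((hat_cont N j).intervalIntegrable _ _)
    (hat_cont N j).aestronglyMeasurable.stronglyMeasurableAtFilter (hat_cont N j).continuousAt

lemma hatI_cont (N j : ℕ) : Continuous (hatI N j) :=
  (show Differentiable ℝ (hatI N j) from fun x => (hasDerivAt_hatI N j x).differentiableAt).continuous

lemma hasDerivAt_hat2 (N j : ℕ) (x : ℝ) : HasDerivAt (hat2 N j) (hatI N j x) x :=
  integral_hasDerivAt_right ((hatI_cont N j).intervalIntegrable _ _)
    (hatI_cont N j).aestronglyMeasurable.stronglyMeasurableAtFilter (hatI_cont N j).continuousAt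

noncomputable def Gfun (N : ℕ) (κ : ℝ) (ζ : ℕ → ℝ) (x : ℝ) : ℝ :=
  κ + ∑ j ∈ Finset.range (N + 1), ζ j * hatI N j x

lemma hasDerivAt_Yconv (N : ℕ) (γ κ : ℝ) (ζ : ℕ → ℝ) (x : ℝ) :
    HasDerivAt (Yconv N γ κ ζ) (Gfun N κ ζ x) x := by
  have h1 : HasDerivAt (fun x : ℝ => γ + κ * x) κ x := by
    simpa using ((hasDerivAt_id x).const_mul κ).const_add γ
  have h2 : HasDerivAt (fun x : ℝ => ∑ j ∈ Finset.range (N + 1), ζ j * hat2 N j x)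
      (∑ j ∈ Finset.range (N + 1), ζ j * hatI N j x) x :=
    HasDerivAt.fun_sum fun j _ => (hasDerivAt_hat2 N j x).const_mul (ζ j)
  exact h1.add h2

lemma hasDerivAt_Gfun (N : ℕ) (κ : ℝ) (ζ : ℕ → ℝ) (x : ℝ) :
    HasDerivAt (Gfun N κ ζ) (∑ j ∈ Finset.range (N + 1), ζ j * hat N j x) x := by
  have h2 : HasDerivAt (fun x : ℝ => ∑ j ∈ Finset.range (N + 1), ζ j * hatI N j x)
      (∑ j ∈ Finset.range (N + 1), ζ j * hat N j x) x :=
    HasDerivAt.fun_sum fun j _ => (hasDerivAt_hatI N j x).const_mul (ζ j)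
  exact h2.const_add κ

lemma hat_eval (N j k : ℕ) (hN : 1 ≤ N) :
    hat N k ((j : ℝ) / N) = if k = j then 1 else 0 := by
  have hNpos : (0 : ℝ) < N := by exact_mod_cast hN
  have key : (N : ℝ) * |(j : ℝ) / N - (k : ℝ) / N| = |(j : ℝ) - k| := by
    rw [div_sub_div_same, abs_div, abs_of_pos hNpos, mul_div_cancel₀ _ hNpos.ne']
  unfold hat
  rw [key]
  by_cases h : k = j
  · subst h; simp
  · have h1 : (1 : ℝ) ≤ |(j : ℝ) - k| := by
      have : (1 : ℤ) ≤ |(j : ℤ) - k| := by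
        have : (j : ℤ) - k ≠ 0 := by
          intro hh
          exact h (by omega)
        exact Int.one_le_abs this
      calc (1 : ℝ) ≤ |((j : ℤ) - k : ℤ)| := by exact_mod_cast this
        _ = |(j : ℝ) - k| := by push_cast; rfl
    simp only [if_neg h]
    exact max_eq_left (by linarith)

lemma deriv_nonneg_of_monotoneOn {g : ℝ → ℝ} {d a b t : ℝ} (hab : a < b)
    (hmono : MonotoneOn g (Icc a b)) (ht : t ∈ Icc a b) (hg : HasDerivAt g d t) : 0 ≤ d := by
  have hs := hasDerivAt_iff_tendsto_slope.mp hg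
  rcases lt_or_eq_of_le ht.2 with h | h
  · have h1 : Tendsto (slope g t) (𝓝[>] t) (𝓝 d) :=
      hs.mono_left (nhdsWithin_mono _ fun y hy => ne_of_gt hy)
    refine ge_of_tendsto h1 ?_
    filter_upwards [Ioo_mem_nhdsGT_of_mem ⟨le_refl t, h⟩] with y hy
    have hle : g t ≤ g y := hmono ht ⟨ht.1.trans hy.1.le, hy.2.le⟩ hy.1.le
    rw [slope_def_field]
    exact div_nonneg (by linarith) (by linarith [hy.1])
  · have hat' : a < t := h ▸ hab
    have h1 : Tendsto (slope g t) (𝓝[<] t) (𝓝 d) :=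
      hs.mono_left (nhdsWithin_mono _ fun y hy => ne_of_lt hy)
    refine ge_of_tendsto h1 ?_
    filter_upwards [Ioo_mem_nhdsLT_of_mem ⟨hat', le_refl t⟩] with y hy
    have hle : g y ≤ g t := hmono ⟨hy.1.le, hy.2.le.trans ht.2⟩ ht hy.2.le
    rw [slope_def_field]
    exact div_nonneg_of_nonpos (by linarith) (by linarith [hy.2])

theorem convex_iff_coeffs_nonneg (N : ℕ) (hN : 1 ≤ N) (γ κ : ℝ) (ζ : ℕ → ℝ) :
    ConvexOn ℝ (Set.Icc (0 : ℝ) 1) (Yconv N γ κ ζ) ↔ (∀ j ≤ N, 0 ≤ ζ j) := by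
  have hNpos : (0 : ℝ) < N := by exact_mod_cast hN
  constructor
  · intro hconv j hj
    have hdiff : ∀ x ∈ Icc (0 : ℝ) 1, DifferentiableAt ℝ (Yconv N γ κ ζ) x :=
      fun x _ => (hasDerivAt_Yconv N γ κ ζ x).differentiableAt
    have hderiv : EqOn (deriv (Yconv N γ κ ζ)) (Gfun N κ ζ) (Icc (0 : ℝ) 1) :=
      fun x _ => (hasDerivAt_Yconv N γ κ ζ x).deriv
    have hmono : MonotoneOn (Gfun N κ ζ) (Icc (0 : ℝ) 1) :=
      (hconv.monotoneOn_deriv hdiff).congr hderiv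
    set t : ℝ := (j : ℝ) / N with hts
    have ht : t ∈ Icc (0 : ℝ) 1 := by
      constructor
      · positivity
      · rw [hts, div_le_one hNpos]; exact_mod_cast hj
    have hd := hasDerivAt_Gfun N κ ζ t
    have hsum : (∑ k ∈ Finset.range (N + 1), ζ k * hat N k t) = ζ j := by
      rw [Finset.sum_eq_single j]
      · rw [hat_eval N j j hN]; simp
      · intro k _ hkj; rw [hat_eval N j k hN, if_neg hkj, mul_zero]
      · intro hjmem; exact absurd (Finset.mem_range.mpr (Nat.lt_succ_of_le hj)) hjmem
    rw [hsum] at hd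
    exact deriv_nonneg_of_monotoneOn one_pos hmono ht hd
  · intro hζ
    refine convexOn_of_hasDerivWithinAt2_nonneg (convex_Icc _ _)
      (f' := Gfun N κ ζ) (f'' := fun x => ∑ k ∈ Finset.range (N + 1), ζ k * hat N k x)
      ?_ ?_ ?_ ?_
    · exact (show Differentiable ℝ (Yconv N γ κ ζ) from
        fun x => (hasDerivAt_Yconv N γ κ ζ x).differentiableAt).continuous.continuousOn
    · exact fun x _ => (hasDerivAt_Yconv N γ κ ζ x).hasDerivWithinAt
    · exact fun x _ => (hasDerivAt_Gfun N κ ζ x).hasDerivWithinAt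
    · intro x _
      refine Finset.sum_nonneg fun k hk => mul_nonneg ?_ (hat_nonneg N k x)
      exact hζ k (Nat.lt_succ_iff.mp (Finset.mem_range.mp hk))
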